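/- Let G be a graph with independent core vertices, u and w non-adjacent core-forbidden vertices, and G+e obtained by adding edge e = {u,w}. Then η(G) = η(G+e) if and only if CV(G) = CV(G+e). -/
import Mathlib


open scoped Classical
open Matrix

variable {V : Type*} [Fintype V] [DecidableEq V]

/-- Nullity of a real square matrix: dimension of its kernel. -/
noncomputable def nullity {m : Type*} [Fintype m] (A : Matrix m m ℝ) : ℕ :=
  Module.finrank ℝ (LinearMap.ker A.mulVecLin)

/-- `v` is a core vertex with respect to the symmetric matrix `A`. -/
def IsCore {m : Type*} [Fintype m] (A : Matrix m m ℝ) (v : m) : Prop :=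
  ∃ x : m → ℝ, A.mulVec x = 0 ∧ x v ≠ 0

/-- The perturbation matrix adding the single edge `{u,w}`. -/
def edgeMat (u w : V) : Matrix V V ℝ :=
  Matrix.of fun i j => if (i = u ∧ j = w) ∨ (i = w ∧ j = u) then 1 else 0

lemma edgeMat_mulVec (u w : V) (huw : u ≠ w) (x : V → ℝ) (hu : x u = 0)
    (hw : x w = 0) : (edgeMat u w).mulVec x = 0 := by
  funext i
  simp only [edgeMat, Matrix.mulVec, dotProduct, Matrix.of_apply, Pi.zero_apply]
  rw [Finset.sum_eq_zero]
  intro j _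
  by_cases h1 : (i = u ∧ j = w) ∨ (i = w ∧ j = u)
  · rcases h1 with ⟨h, rfl⟩ | ⟨h, rfl⟩ <;> simp [hw, hu]
  · simp [h1]

/-- Adding an edge between two non-adjacent core-forbidden vertices of a graph with
independent core vertices preserves the nullity iff it preserves the core vertex set. -/
theorem stmt_18 (G : SimpleGraph V) [DecidableRel G.Adj] (u w : V)
    (huw : u ≠ w) (hadj : ¬ G.Adj u w)
    (hu : ¬ IsCore (G.adjMatrix ℝ) u) (hw : ¬ IsCore (G.adjMatrix ℝ) w)
    (hind : ∀ a b : V, IsCore (G.adjMatrix ℝ) a → IsCore (G.adjMatrix ℝ) b →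
      ¬ G.Adj a b) :
    nullity (G.adjMatrix ℝ) = nullity ((G.adjMatrix ℝ) + edgeMat u w)
      ↔ {v : V | IsCore (G.adjMatrix ℝ) v}
          = {v : V | IsCore ((G.adjMatrix ℝ) + edgeMat u w) v} := by
  set A := G.adjMatrix ℝ with hA
  set B := A + edgeMat u w with hB
  -- every kernel vector of A vanishes at u and w
  have hu' : ∀ x : V → ℝ, A.mulVec x = 0 → x u = 0 := by
    intro x hx; by_contra h; exact hu ⟨x, hx, h⟩
  have hw' : ∀ x : V → ℝ, A.mulVec x = 0 → x w = 0 := by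
    intro x hx; by_contra h; exact hw ⟨x, hx, h⟩
  -- ker A ≤ ker B
  have hle : LinearMap.ker A.mulVecLin ≤ LinearMap.ker B.mulVecLin := by
    intro x hx
    rw [LinearMap.mem_ker, Matrix.mulVecLin_apply] at hx ⊢
    rw [hB, Matrix.add_mulVec, hx,
      edgeMat_mulVec u w huw x (hu' x hx) (hw' x hx), add_zero]
  constructor
  · intro hnull
    have hker : LinearMap.ker A.mulVecLin = LinearMap.ker B.mulVecLin :=
      Submodule.eq_of_le_of_finrank_eq hle hnull
    ext v
    simp only [Set.mem_setOf_eq, IsCore]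
    constructor <;> rintro ⟨x, hx, hxv⟩
    · refine ⟨x, ?_, hxv⟩
      have : x ∈ LinearMap.ker B.mulVecLin := hker ▸ (by
        rw [LinearMap.mem_ker, Matrix.mulVecLin_apply]; exact hx)
      rwa [LinearMap.mem_ker, Matrix.mulVecLin_apply] at this
    · refine ⟨x, ?_, hxv⟩
      have : x ∈ LinearMap.ker A.mulVecLin := hker ▸ (by
        rw [LinearMap.mem_ker, Matrix.mulVecLin_apply]; exact hx)
      rwa [LinearMap.mem_ker, Matrix.mulVecLin_apply] at this
  · intro hset
    have hcoreB : ∀ v : V, IsCore B v → IsCore A v := by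
      intro v hv
      have : v ∈ {v : V | IsCore A v} := hset ▸ hv
      exact this
    -- u, w are core-forbidden in B
    have huB : ∀ x : V → ℝ, B.mulVec x = 0 → x u = 0 := by
      intro x hx; by_contra h
      exact hu (hcoreB u ⟨x, hx, h⟩)
    have hwB : ∀ x : V → ℝ, B.mulVec x = 0 → x w = 0 := by
      intro x hx; by_contra h
      exact hw (hcoreB w ⟨x, hx, h⟩)
    have hge : LinearMap.ker B.mulVecLin ≤ LinearMap.ker A.mulVecLin := by
      intro x hx
      rw [LinearMap.mem_ker, Matrix.mulVecLin_apply] at hx ⊢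
      have hE := edgeMat_mulVec u w huw x (huB x hx) (hwB x hx)
      have : A.mulVec x + (edgeMat u w).mulVec x = 0 := by
        rw [← Matrix.add_mulVec, ← hB]; exact hx
      rwa [hE, add_zero] at this
    rw [nullity, nullity, le_antisymm hle hge]
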